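/- Every infinite-dimensional complex Banach space X satisfies G_a(X) ≥ 1/2, where G_a(X) is the gap for absolute convergence of Dirichlet series in X. -/

import Mathlib

open Filter Finset Topology

/-- From `(1+t)^d ≤ (1+tc)^N` for all `t>0` deduce `d ≤ N c`. -/
lemma le_mul_of_pow_le_pow (d N : ℕ) (c : ℝ) (hc : 0 ≤ c)
    (h : ∀ t : ℝ, 0 < t → (1 + t) ^ d ≤ (1 + t * c) ^ N) :
    (d : ℝ) ≤ N * c := by
  refine le_of_forall_pos_le_add fun ε hε => ?_
  set B : ℝ := (N * c) ^ 2 + 1 with hB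
  have hBpos : 0 < B := by positivity
  set t : ℝ := min (1 / (N * c + 1)) (ε / B) with ht
  have htpos : 0 < t := lt_min (by positivity) (by positivity)
  have htc : t * (N * c) ≤ 1 := by
    calc t * (N * c) ≤ (1 / (N * c + 1)) * (N * c + 1) := by
          apply mul_le_mul (min_le_left _ _) (by linarith) (by positivity) (by positivity)
      _ = 1 := by field_simp
  -- Bernoulli
  have h1 : 1 + (d : ℝ) * t ≤ (1 + t) ^ d := by
    have := one_add_mul_le_pow (a := t) (by linarith) d
    linarith [this]
  -- (1+tc)^N ≤ exp (N t c)
  have h2 : (1 + t * c) ^ N ≤ Real.exp (t * (N * c)) := by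
    calc (1 + t * c) ^ N ≤ (Real.exp (t * c)) ^ N := by
          have h0 : 1 + t * c ≤ Real.exp (t * c) := by
            have := Real.add_one_le_exp (t * c); linarith
          exact pow_le_pow_left₀ (by positivity) h0 N
      _ = Real.exp (t * c * N) := by rw [← Real.exp_nat_mul]; ring_nf
      _ = Real.exp (t * (N * c)) := by ring_nf
  -- exp x ≤ 1 + x + x^2 for 0 ≤ x ≤ 1
  have h3 : ∀ x : ℝ, 0 ≤ x → x ≤ 1 → Real.exp x ≤ 1 + x + x ^ 2 := by
    intro x hx0 hx1
    have hb := Real.exp_bound (x := x) (by rw [abs_of_nonneg hx0]; exact hx1) (n := 2) (by norm_num)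
    have : |Real.exp x - ∑ i ∈ Finset.range 2, x ^ i / i.factorial| ≤ x ^ 2 * (3 / 4) := by
      rw [abs_of_nonneg hx0] at hb
      convert hb using 2
      norm_num
    have hs : ∑ i ∈ Finset.range 2, x ^ i / (i.factorial : ℝ) = 1 + x := by
      simp [Finset.sum_range_succ]
    rw [hs] at this
    have := abs_le.mp this
    nlinarith [this.2, sq_nonneg x]
  have h4 := h3 (t * (N * c)) (by positivity) htc
  have h5 : 1 + (d : ℝ) * t ≤ 1 + t * (N * c) + (t * (N * c)) ^ 2 :=
    le_trans h1 (le_trans (h t htpos) (le_trans h2 h4))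
  have h6 : (d : ℝ) ≤ N * c + t * (N * c) ^ 2 := by
    have h7 : t * (d : ℝ) ≤ t * (N * c + t * (N * c) ^ 2) := by nlinarith [h5]
    exact le_of_mul_le_mul_left h7 htpos
  have h8 : t * (N * c) ^ 2 ≤ ε := by
    calc t * (N * c) ^ 2 ≤ (ε / B) * (N * c) ^ 2 := by
          apply mul_le_mul_of_nonneg_right (min_le_right _ _) (by positivity)
      _ ≤ (ε / B) * B := by
          apply mul_le_mul_of_nonneg_left (by rw [hB]; nlinarith) (by positivity)
      _ = ε := by field_simp
  linarith

lemma exists_li_family {X : Type*} [NormedAddCommGroup X] [NormedSpace ℂ X]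
    (hX : ¬ FiniteDimensional ℂ X) (n : ℕ) : ∃ v : Fin n → X, LinearIndependent ℂ v := by
  induction n with
  | zero => exact ⟨fun i => 0, linearIndependent_empty_type⟩
  | succ n ih =>
    obtain ⟨v, hv⟩ := ih
    have hne : Submodule.span ℂ (Set.range v) ≠ ⊤ := by
      intro htop
      exact hX ⟨Submodule.fg_def.mpr ⟨Set.range v, Set.finite_range v, htop⟩⟩
    obtain ⟨x, hx⟩ : ∃ x : X, x ∉ Submodule.span ℂ (Set.range v) := by
      by_contra hcon
      push_neg at hcon
      exact hne (Submodule.eq_top_iff'.mpr hcon)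
    exact ⟨Fin.cons x v, linearIndependent_fin_cons.mpr ⟨hv, hx⟩⟩

section Euclid

variable {N : ℕ} {E : Type*} [NormedAddCommGroup E] [NormedSpace ℂ E]

/-- determinant functional for maps from Euclidean space, w.r.t. a basis of `E`. -/
noncomputable def detF (bE : Module.Basis (Fin N) ℂ E) (T : EuclideanSpace ℂ (Fin N) →L[ℂ] E) : ℂ :=
  (LinearMap.toMatrix (PiLp.basisFun 2 ℂ (Fin N)) bE (T : EuclideanSpace ℂ (Fin N) →ₗ[ℂ] E)).det

lemma detF_smul (bE : Module.Basis (Fin N) ℂ E) (c : ℂ) (T : EuclideanSpace ℂ (Fin N) →L[ℂ] E) :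
    detF bE (c • T) = c ^ N * detF bE T := by
  unfold detF
  rw [ContinuousLinearMap.coe_smul, map_smul, Matrix.det_smul, Fintype.card_fin]

lemma exists_detmax [FiniteDimensional ℂ E] (bE : Module.Basis (Fin N) ℂ E) :
    ∃ T₀ : EuclideanSpace ℂ (Fin N) →L[ℂ] E, ‖T₀‖ ≤ 1 ∧ 0 < ‖detF bE T₀‖ ∧
      ∀ T : EuclideanSpace ℂ (Fin N) →L[ℂ] E, ‖T‖ ≤ 1 → ‖detF bE T‖ ≤ ‖detF bE T₀‖ := by
  set V := EuclideanSpace ℂ (Fin N)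
  set bV : Module.Basis (Fin N) ℂ V := PiLp.basisFun 2 ℂ (Fin N) with hbV
  haveI : FiniteDimensional ℂ (V →L[ℂ] E) :=
    (LinearMap.toContinuousLinearMap (𝕜 := ℂ) (E := V) (F' := E)).finiteDimensional
  haveI : ProperSpace (V →L[ℂ] E) := FiniteDimensional.proper ℂ _
  -- continuity of the determinant functional
  have hcont : Continuous fun T : V →L[ℂ] E => ‖detF bE T‖ := by
    apply Continuous.norm
    apply Continuous.matrix_det
    apply continuous_matrix
    intro i j
    have h1 : Continuous fun T : V →L[ℂ] E => T (bV j) :=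
      (ContinuousLinearMap.apply ℂ E (bV j)).continuous
    have h2 : Continuous fun y : E => bE.equivFun y i := by
      exact (continuous_apply i).comp
        (LinearMap.continuous_of_finiteDimensional (bE.equivFun : E ≃ₗ[ℂ] (Fin N → ℂ)).toLinearMap)
    have : (fun T : V →L[ℂ] E => LinearMap.toMatrix bV bE (T : V →ₗ[ℂ] E) i j)
        = fun T : V →L[ℂ] E => bE.equivFun (T (bV j)) i := by
      funext T
      rw [LinearMap.toMatrix_apply, Module.Basis.equivFun_apply]
      rfl
    rw [this]
    exact h2.comp h1
  obtain ⟨T₀, hT₀mem, hT₀max'⟩ :=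
    (isCompact_closedBall (0 : V →L[ℂ] E) 1).exists_isMaxOn
      ⟨0, Metric.mem_closedBall_self zero_le_one⟩ hcont.continuousOn
  have hT₀max : ∀ T ∈ Metric.closedBall (0 : V →L[ℂ] E) 1, ‖detF bE T‖ ≤ ‖detF bE T₀‖ :=
    fun T hT => hT₀max' hT
  rw [Metric.mem_closedBall, dist_zero_right] at hT₀mem
  refine ⟨T₀, hT₀mem, ?_, fun T hT => hT₀max T (by rwa [Metric.mem_closedBall, dist_zero_right])⟩
  -- positivity via a scaled isomorphism
  set L : V →L[ℂ] E := LinearMap.toContinuousLinearMap (Module.Basis.equiv bV bE (Equiv.refl _)).toLinearMap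
  have hLdet : detF bE L = 1 := by
    unfold detF
    have : LinearMap.toMatrix bV bE (L : V →ₗ[ℂ] E) = 1 := by
      ext i j
      rw [LinearMap.toMatrix_apply]
      have : (L : V →ₗ[ℂ] E) (bV j) = bE j := by
        simp [L, Module.Basis.equiv_apply]
      rw [this, Module.Basis.repr_self]
      simp [Matrix.one_apply, Finsupp.single_apply, eq_comm]
    rw [this, Matrix.det_one]
  set c : ℝ := (‖L‖ + 1)⁻¹ with hc
  have hcpos : 0 < c := by positivity
  have hT1 : ‖(c : ℂ) • L‖ ≤ 1 := by
    have hns := norm_smul ((c : ℂ)) L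
    rw [hns]
    simp only [Complex.norm_real, Real.norm_eq_abs, abs_of_pos hcpos]
    rw [hc]
    rw [inv_mul_le_one₀ (by positivity)]
    linarith [norm_nonneg L]
  have hdet1 : ‖detF bE ((c:ℂ) • L)‖ = c ^ N := by
    rw [detF_smul, hLdet, mul_one, norm_pow]
    simp [abs_of_pos hcpos]
  have := hT₀max ((c:ℂ) • L) (by rwa [Metric.mem_closedBall, dist_zero_right])
  rw [hdet1] at this
  exact lt_of_lt_of_le (by positivity) this

/-- The orthogonal-complement flags. -/
noncomputable def Fk (u : ℕ → EuclideanSpace ℂ (Fin N)) (k : ℕ) : Submodule ℂ (EuclideanSpace ℂ (Fin N)) :=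
  (Submodule.span ℂ (Set.range (fun i : Fin k => u i)))ᗮ

lemma Fk_congr {u u' : ℕ → EuclideanSpace ℂ (Fin N)} (k : ℕ) (h : ∀ i < k, u i = u' i) :
    Fk u k = Fk u' k := by
  unfold Fk
  rw [show (fun i : Fin k => u i) = (fun i : Fin k => u' i) from funext fun i => h i i.2]

/-- Property of the greedy orthonormal sequence adapted to `T₀`. -/
def GoodSeq (T₀ : EuclideanSpace ℂ (Fin N) →L[ℂ] E) (u : ℕ → EuclideanSpace ℂ (Fin N)) : Prop :=
  ∀ k < N, ‖u k‖ = 1 ∧ u k ∈ Fk u k ∧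
    ∀ w ∈ Fk u k, ‖w‖ = 1 → ‖T₀ w‖ ≤ ‖T₀ (u k)‖

lemma exists_goodSeq (T₀ : EuclideanSpace ℂ (Fin N) →L[ℂ] E) :
    ∃ u : ℕ → EuclideanSpace ℂ (Fin N), GoodSeq T₀ u := by
  set V := EuclideanSpace ℂ (Fin N)
  suffices h : ∀ j : ℕ, j ≤ N → ∃ u : ℕ → V, ∀ k < j, ‖u k‖ = 1 ∧ u k ∈ Fk u k ∧
      ∀ w ∈ Fk u k, ‖w‖ = 1 → ‖T₀ w‖ ≤ ‖T₀ (u k)‖ by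
    obtain ⟨u, hu⟩ := h N le_rfl
    exact ⟨u, hu⟩
  intro j
  induction j with
  | zero => exact fun _ => ⟨fun _ => 0, fun k hk => absurd hk (Nat.not_lt_zero k)⟩
  | succ j ih =>
    intro hjN
    obtain ⟨u, hu⟩ := ih (le_of_lt hjN)
    -- the orthogonal complement is nontrivial
    set S : Submodule ℂ V := Submodule.span ℂ (Set.range (fun i : Fin j => u i)) with hS
    set F := Fk u j with hF
    have hgoal : F = Sᗮ := rfl
    have hrank : Module.finrank ℂ S ≤ j := by
      have := finrank_range_le_card (R := ℂ) (b := fun i : Fin j => u i)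
      simpa [Set.finrank, hS] using this
    have hrkF : 0 < Module.finrank ℂ F := by
      have hsum := Submodule.finrank_add_finrank_orthogonal (K := S) (𝕜 := ℂ)
      rw [finrank_euclideanSpace_fin] at hsum
      rw [hgoal]
      have hjN' : j < N := hjN
      rcases Nat.eq_zero_or_pos (Module.finrank ℂ Sᗮ) with h0 | hpos
      · rw [h0, Nat.add_zero] at hsum
        rw [hsum] at hrank
        omega
      · exact hpos
    have hFne : ∃ z : V, z ∈ F ∧ ‖z‖ = 1 := by
      have hne : F ≠ ⊥ := by
        intro hbot
        rw [hbot, finrank_bot] at hrkF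
        exact lt_irrefl 0 hrkF
      obtain ⟨z, hzF, hz0⟩ := Submodule.ne_bot_iff F |>.mp hne
      refine ⟨((‖z‖ : ℂ))⁻¹ • z, Submodule.smul_mem _ _ hzF, ?_⟩
      rw [norm_smul, norm_inv, Complex.norm_real, Real.norm_eq_abs,
        abs_of_pos (norm_pos_iff.mpr hz0)]
      exact inv_mul_cancel₀ (norm_ne_zero_iff.mpr hz0)
    -- maximize ‖T₀ ·‖ on the unit sphere of F
    have hA : IsCompact ((F : Set V) ∩ Metric.sphere 0 1) :=
      (isCompact_sphere (0 : V) 1).inter_left (Submodule.closed_of_finiteDimensional F)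
    obtain ⟨z, hz⟩ := hFne
    have hAne : ((F : Set V) ∩ Metric.sphere 0 1).Nonempty :=
      ⟨z, hz.1, by rw [mem_sphere_zero_iff_norm]; exact hz.2⟩
    obtain ⟨z₀, hz₀mem, hz₀max'⟩ :=
      hA.exists_isMaxOn hAne (T₀.continuous.norm.continuousOn)
    have hz₀max : ∀ w ∈ (F : Set V) ∩ Metric.sphere 0 1, ‖T₀ w‖ ≤ ‖T₀ z₀‖ :=
      fun w hw => hz₀max' hw
    rw [Set.mem_inter_iff, mem_sphere_zero_iff_norm] at hz₀mem
    refine ⟨Function.update u j z₀, fun k hk => ?_⟩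
    have hagree : ∀ i < j, u i = Function.update u j z₀ i := fun i hi =>
      (Function.update_of_ne (Nat.ne_of_lt hi) _ _).symm
    rcases Nat.lt_succ_iff_lt_or_eq.mp hk with hkj | hkj
    · have hFeq : Fk u k = Fk (Function.update u j z₀) k :=
        Fk_congr k fun i hi => hagree i (lt_trans hi hkj)
      have h1 := hu k hkj
      rw [Function.update_of_ne (Nat.ne_of_lt hkj), ← hFeq]
      exact h1
    · subst hkj
      have hFeq : Fk u k = Fk (Function.update u k z₀) k :=
        Fk_congr k fun i hi => hagree i hi
      rw [Function.update_self, ← hFeq]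
      refine ⟨hz₀mem.2, hz₀mem.1, fun w hw hw1 => ?_⟩
      exact hz₀max w ⟨hw, by rw [mem_sphere_zero_iff_norm]; exact hw1⟩

end Euclid

section Euclid2

variable {N : ℕ} {E : Type*} [NormedAddCommGroup E] [NormedSpace ℂ E]

lemma goodSeq_inner_zero {T₀ : EuclideanSpace ℂ (Fin N) →L[ℂ] E}
    {u : ℕ → EuclideanSpace ℂ (Fin N)} (hu : GoodSeq T₀ u)
    {p q : ℕ} (hpq : p < q) (hq : q < N) :
    (inner ℂ (u p) (u q) : ℂ) = 0 := by
  have hmem : u q ∈ Fk u q := (hu q hq).2.1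
  have hp : u p ∈ Submodule.span ℂ (Set.range (fun i : Fin q => u i)) :=
    Submodule.subset_span ⟨⟨p, hpq⟩, rfl⟩
  exact (Submodule.mem_orthogonal _ _).mp hmem _ hp

lemma goodSeq_orthonormal {T₀ : EuclideanSpace ℂ (Fin N) →L[ℂ] E}
    {u : ℕ → EuclideanSpace ℂ (Fin N)} (hu : GoodSeq T₀ u) :
    Orthonormal ℂ (fun i : Fin N => u i) := by
  rw [orthonormal_iff_ite]
  intro i j
  by_cases hij : i = j
  · subst hij
    rw [if_pos rfl]
    have h1 : ‖u i‖ = 1 := (hu i i.2).1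
    rw [inner_self_eq_norm_sq_to_K (𝕜 := ℂ) (u (i:ℕ)), h1]
    norm_num
  · simp only [if_neg hij]
    rcases lt_or_gt_of_ne (fun h => hij (Fin.ext h) : (i : ℕ) ≠ j) with h | h
    · exact goodSeq_inner_zero hu h j.2
    · rw [← inner_conj_symm]
      rw [goodSeq_inner_zero hu h i.2]
      simp

lemma goodSeq_mem_Fk {T₀ : EuclideanSpace ℂ (Fin N) →L[ℂ] E}
    {u : ℕ → EuclideanSpace ℂ (Fin N)} (hu : GoodSeq T₀ u)
    {k j : ℕ} (hkj : k ≤ j) (hj : j < N) : u j ∈ Fk u k := by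
  have h1 : u j ∈ Fk u j := (hu j hj).2.1
  have h2 : Fk u j ≤ Fk u k := by
    apply Submodule.orthogonal_le
    apply Submodule.span_mono
    rintro x ⟨i, rfl⟩
    exact ⟨⟨(i : ℕ), lt_of_lt_of_le i.2 hkj⟩, rfl⟩
  exact h2 h1

lemma ck_bound [FiniteDimensional ℂ E] (hN : 0 < N) (bE : Module.Basis (Fin N) ℂ E)
    (T₀ : EuclideanSpace ℂ (Fin N) →L[ℂ] E) (hT₀ : ‖T₀‖ ≤ 1)
    (hdet : 0 < ‖detF bE T₀‖)
    (hmax : ∀ T : EuclideanSpace ℂ (Fin N) →L[ℂ] E, ‖T‖ ≤ 1 → ‖detF bE T‖ ≤ ‖detF bE T₀‖)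
    {u : ℕ → EuclideanSpace ℂ (Fin N)} (hu : GoodSeq T₀ u)
    {k : ℕ} (hk : k < N) :
    (N : ℝ) - k ≤ N * ‖T₀ (u k)‖ := by
  classical
  set bV : Module.Basis (Fin N) ℂ (EuclideanSpace ℂ (Fin N)) := PiLp.basisFun 2 ℂ (Fin N) with hbV
  set c : ℝ := ‖T₀ (u k)‖ with hcdef
  have hc0 : 0 ≤ c := norm_nonneg _
  set F := Fk u k with hFdef
  -- norm estimate on F
  have hTF : ∀ w ∈ F, ‖T₀ w‖ ≤ c * ‖w‖ := by
    intro w hw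
    rcases eq_or_ne w 0 with rfl | hw0
    · simp
    · have hnw : (0:ℝ) < ‖w‖ := norm_pos_iff.mpr hw0
      set w' : EuclideanSpace ℂ (Fin N) := ((‖w‖ : ℂ))⁻¹ • w with hw'
      have hw'F : w' ∈ F := Submodule.smul_mem _ _ hw
      have hw'1 : ‖w'‖ = 1 := by
        rw [hw', norm_smul, norm_inv, Complex.norm_real, Real.norm_eq_abs, abs_of_pos hnw]
        exact inv_mul_cancel₀ (ne_of_gt hnw)
      have := (hu k hk).2.2 w' hw'F hw'1
      have hT₀w' : ‖T₀ w'‖ = ‖w‖⁻¹ * ‖T₀ w‖ := by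
        rw [hw', map_smul, norm_smul, norm_inv, Complex.norm_real, Real.norm_eq_abs,
          abs_of_pos hnw]
      rw [hT₀w'] at this
      calc ‖T₀ w‖ = ‖w‖ * (‖w‖⁻¹ * ‖T₀ w‖) := by field_simp
        _ ≤ ‖w‖ * c := by
            apply mul_le_mul_of_nonneg_left this (le_of_lt hnw)
        _ = c * ‖w‖ := mul_comm _ _
  -- the orthonormal basis from the good sequence
  have hON := goodSeq_orthonormal hu
  have hli := hON.linearIndependent
  haveI : Nonempty (Fin N) := ⟨⟨0, hN⟩⟩
  have hcard : Fintype.card (Fin N) = Module.finrank ℂ (EuclideanSpace ℂ (Fin N)) := by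
    rw [Fintype.card_fin, finrank_euclideanSpace_fin]
  set bu : Module.Basis (Fin N) ℂ (EuclideanSpace ℂ (Fin N)) := basisOfLinearIndependentOfCardEqFinrank hli hcard with hbu
  have hbu_coe : ∀ i : Fin N, bu i = u i := by
    intro i
    rw [hbu, coe_basisOfLinearIndependentOfCardEqFinrank]
  -- main inequality for all t > 0
  have key : ∀ t : ℝ, 0 < t → (1 + t) ^ (N - k) ≤ (1 + t * c) ^ N := by
    intro t ht
    set P : EuclideanSpace ℂ (Fin N) →L[ℂ] EuclideanSpace ℂ (Fin N) := F.subtypeL.comp (F.orthogonalProjectionOnto) with hP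
    set Sm : EuclideanSpace ℂ (Fin N) →L[ℂ] EuclideanSpace ℂ (Fin N) := ContinuousLinearMap.id ℂ (EuclideanSpace ℂ (Fin N)) + (t : ℂ) • P with hSm
    set Tt : EuclideanSpace ℂ (Fin N) →L[ℂ] E := T₀.comp Sm with hTt
    -- norm of Tt
    have hTtnorm : ‖Tt‖ ≤ 1 + t * c := by
      apply ContinuousLinearMap.opNorm_le_bound _ (by positivity)
      intro v
      have hPv : ‖P v‖ ≤ ‖v‖ := by
        have h1 : ‖(F.orthogonalProjectionOnto) v‖ ≤ ‖v‖ := by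
          have := (F.orthogonalProjectionOnto).le_opNorm v
          have h2 := Submodule.orthogonalProjectionOnto_norm_le F
          nlinarith [norm_nonneg v]
        simpa [hP] using h1
      have hPvF : P v ∈ F := by
        simp only [hP, ContinuousLinearMap.coe_comp', Function.comp_apply,
          Submodule.coe_subtypeL', Submodule.coe_subtype]
        exact Submodule.coe_mem _
      have hexp : Tt v = T₀ v + (t:ℂ) • T₀ (P v) := by
        simp only [hTt, hSm, ContinuousLinearMap.coe_comp', Function.comp_apply,
          ContinuousLinearMap.add_apply, ContinuousLinearMap.coe_id', id_eq,
          ContinuousLinearMap.coe_smul', Pi.smul_apply, map_add, map_smul]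
      rw [hexp]
      calc ‖T₀ v + (t:ℂ) • T₀ (P v)‖ ≤ ‖T₀ v‖ + ‖(t:ℂ) • T₀ (P v)‖ := norm_add_le _ _
        _ ≤ ‖v‖ + t * (c * ‖v‖) := by
            apply add_le_add
            · calc ‖T₀ v‖ ≤ ‖T₀‖ * ‖v‖ := T₀.le_opNorm v
                _ ≤ 1 * ‖v‖ := mul_le_mul_of_nonneg_right hT₀ (norm_nonneg v)
                _ = ‖v‖ := one_mul _
            · rw [norm_smul, Complex.norm_real, Real.norm_eq_abs, abs_of_pos ht]
              apply mul_le_mul_of_nonneg_left _ (le_of_lt ht)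
              calc ‖T₀ (P v)‖ ≤ c * ‖P v‖ := hTF _ hPvF
                _ ≤ c * ‖v‖ := mul_le_mul_of_nonneg_left hPv hc0
        _ = (1 + t * c) * ‖v‖ := by ring
    -- determinant of Sm
    have hdetSm : LinearMap.det (Sm : EuclideanSpace ℂ (Fin N) →ₗ[ℂ] EuclideanSpace ℂ (Fin N)) = (1 + (t:ℂ)) ^ (N - k) := by
      rw [← LinearMap.det_toMatrix bu]
      have hmat : LinearMap.toMatrix bu bu (Sm : EuclideanSpace ℂ (Fin N) →ₗ[ℂ] EuclideanSpace ℂ (Fin N))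
          = Matrix.diagonal (fun i : Fin N => if k ≤ (i : ℕ) then 1 + (t:ℂ) else 1) := by
        ext i j
        rw [LinearMap.toMatrix_apply, hbu_coe]
        have hSmuj : (Sm : EuclideanSpace ℂ (Fin N) →ₗ[ℂ] EuclideanSpace ℂ (Fin N)) (u j) = (if k ≤ (j : ℕ) then 1 + (t:ℂ) else 1) • u j := by
          by_cases hkj : k ≤ (j : ℕ)
          · have hujF : u j ∈ F := goodSeq_mem_Fk hu hkj j.2
            have hproj : P (u j) = u j := by
              have := Submodule.orthogonalProjectionOnto_mem_subspace_eq_self (K := F) ⟨u j, hujF⟩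
              simp only [hP, ContinuousLinearMap.coe_comp', Function.comp_apply,
                Submodule.coe_subtypeL', Submodule.coe_subtype]
              rw [this]
            simp only [hSm, if_pos hkj, ContinuousLinearMap.coe_coe,
              ContinuousLinearMap.add_apply, ContinuousLinearMap.coe_id', id_eq,
              ContinuousLinearMap.coe_smul', Pi.smul_apply, hproj]
            rw [add_smul, one_smul]
          · have hjk : (j : ℕ) < k := Nat.lt_of_not_le hkj
            have hujS : u j ∈ Submodule.span ℂ (Set.range (fun i : Fin k => u i)) :=
              Submodule.subset_span ⟨⟨j, hjk⟩, rfl⟩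
            have hujFo : u j ∈ Fᗮ := by
              rw [hFdef]
              unfold Fk
              rw [Submodule.orthogonal_orthogonal]
              exact hujS
            have hproj : P (u j) = 0 := by
              have := Submodule.orthogonalProjectionOnto_apply_of_mem_orthogonal hujFo
              simp only [hP, ContinuousLinearMap.coe_comp', Function.comp_apply,
                Submodule.coe_subtypeL', Submodule.coe_subtype]
              rw [this]
              simp
            simp only [hSm, if_neg hkj, ContinuousLinearMap.coe_coe,
              ContinuousLinearMap.add_apply, ContinuousLinearMap.coe_id', id_eq,
              ContinuousLinearMap.coe_smul', Pi.smul_apply, hproj]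
            rw [smul_zero, add_zero, one_smul]
        rw [show ((Sm : EuclideanSpace ℂ (Fin N) →ₗ[ℂ] EuclideanSpace ℂ (Fin N)) (u j)) = _ from hSmuj]
        rw [map_smul]
        have : bu.repr (u j) = Finsupp.single j 1 := by
          rw [← hbu_coe j, Module.Basis.repr_self]
        rw [this]
        simp only [Finsupp.smul_single, smul_eq_mul, mul_one, Finsupp.single_apply,
          Matrix.diagonal_apply]
        by_cases hij : i = j
        · subst hij; simp
        · simp [hij, Ne.symm hij]
      rw [hmat, Matrix.det_diagonal]
      have : ∏ i : Fin N, (if k ≤ (i : ℕ) then 1 + (t:ℂ) else 1)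
          = ∏ n ∈ Finset.range N, (if k ≤ n then 1 + (t:ℂ) else 1) := by
        rw [Finset.prod_range fun n => (if k ≤ n then 1 + (t:ℂ) else 1)]
      rw [this, ← Finset.prod_filter]
      have hfil : (Finset.range N).filter (fun n => k ≤ n) = Finset.Ico k N := by
        ext n
        simp [Finset.mem_filter, Finset.mem_range, Finset.mem_Ico, and_comm]
      rw [hfil, Finset.prod_const, Nat.card_Ico]
    -- determinant of Tt
    have hdetTt : detF bE Tt = detF bE T₀ * (1 + (t:ℂ)) ^ (N - k) := by
      unfold detF
      rw [hTt]
      rw [ContinuousLinearMap.toLinearMap_comp]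
      rw [LinearMap.toMatrix_comp bV bV bE]
      rw [Matrix.det_mul, LinearMap.det_toMatrix]
      rw [hdetSm]
    -- apply maximality to the rescaled operator
    have h1tc : (0:ℝ) < 1 + t * c := by positivity
    set T' : EuclideanSpace ℂ (Fin N) →L[ℂ] E := (((1 + t * c : ℝ))⁻¹ : ℂ) • Tt with hT'
    have hT'norm : ‖T'‖ ≤ 1 := by
      have hns := norm_smul ((((1 + t * c : ℝ))⁻¹ : ℂ)) Tt
      rw [hT', hns, norm_inv, Complex.norm_real, Real.norm_eq_abs, abs_of_pos h1tc]
      rw [inv_mul_le_one₀ h1tc]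
      simpa using hTtnorm
    have hdT' := hmax T' hT'norm
    have hdT'val : ‖detF bE T'‖ = (1 + t * c)⁻¹ ^ N * (‖detF bE T₀‖ * (1 + t) ^ (N - k)) := by
      rw [hT', detF_smul, hdetTt]
      rw [norm_mul, norm_pow, norm_mul, norm_pow, norm_inv, Complex.norm_real,
        Real.norm_eq_abs, abs_of_pos h1tc]
      congr 2
      have : (1 + (t:ℂ)) = ((1 + t : ℝ) : ℂ) := by push_cast; ring
      rw [this, Complex.norm_real, Real.norm_eq_abs, abs_of_pos (by linarith)]
    rw [hdT'val] at hdT'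
    -- rearrange
    have hpow : (0:ℝ) < (1 + t * c) ^ N := by positivity
    have := mul_le_mul_of_nonneg_left hdT' (le_of_lt hpow)
    rw [← mul_assoc, ← mul_pow, mul_inv_cancel₀ (ne_of_gt h1tc), one_pow, one_mul] at this
    have h2 : ‖detF bE T₀‖ * (1 + t) ^ (N - k) ≤ ‖detF bE T₀‖ * (1 + t * c) ^ N := by
      calc ‖detF bE T₀‖ * (1 + t) ^ (N - k) ≤ (1 + t * c) ^ N * ‖detF bE T₀‖ := this
        _ = ‖detF bE T₀‖ * (1 + t * c) ^ N := mul_comm _ _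
    exact le_of_mul_le_mul_left h2 hdet
  have := le_mul_of_pow_le_pow (N - k) N c hc0 key
  have hcast : ((N - k : ℕ) : ℝ) = (N : ℝ) - k := by
    rw [Nat.cast_sub (le_of_lt hk)]
  rw [hcast] at this
  exact this

end Euclid2

/-- Dvoretzky–Rogers-type lemma: in an infinite-dimensional complex normed space,
for every `m` there are vectors of norm in `[1/2, 1]` whose weak-`ℓ¹` sums are `O(√m)`. -/
lemma dvoretzky_rogers {X : Type*} [NormedAddCommGroup X] [NormedSpace ℂ X]
    (hX : ¬ FiniteDimensional ℂ X) (m : ℕ) :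
    ∃ x : Fin m → X, (∀ i, (1:ℝ)/2 ≤ ‖x i‖) ∧ (∀ i, ‖x i‖ ≤ 1) ∧
      ∀ x' : X →L[ℂ] ℂ, ∑ i, ‖x' (x i)‖ ≤ Real.sqrt m * ‖x'‖ := by
  classical
  rcases Nat.eq_zero_or_pos m with rfl | hm
  · exact ⟨fun i => 0, fun i => absurd i.2 (Nat.not_lt_zero _), fun i => absurd i.2 (Nat.not_lt_zero _),
      fun x' => by simp⟩
  set N := 2 * m with hN
  have hN0 : 0 < N := by omega
  obtain ⟨v, hv⟩ := exists_li_family hX N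
  set E := Submodule.span ℂ (Set.range v) with hE
  haveI : FiniteDimensional ℂ E := FiniteDimensional.span_of_finite ℂ (Set.finite_range v)
  have hfr : Module.finrank ℂ E = N := by
    rw [hE, finrank_span_eq_card hv, Fintype.card_fin]
  set bE : Module.Basis (Fin N) ℂ E := Module.Basis.span hv with hbE
  obtain ⟨T₀, hT₀, hdet, hmax⟩ := exists_detmax bE
  obtain ⟨u, hu⟩ := exists_goodSeq (E := E) T₀
  -- the vectors
  refine ⟨fun i => (T₀ (u i) : X), ?_, ?_, ?_⟩
  · intro i
    have hb := ck_bound hN0 bE T₀ hT₀ hdet hmax hu (k := (i : ℕ)) (by omega)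
    have hnorm : ‖(T₀ (u i) : X)‖ = ‖T₀ (u (i:ℕ))‖ := rfl
    rw [hnorm]
    have him : (i : ℕ) < m := i.2
    have : (m : ℝ) ≤ (N : ℝ) - (i : ℕ) := by
      rw [hN]; push_cast; have : ((i:ℕ) : ℝ) ≤ (m : ℝ) - 1 := by
        have : ((i:ℕ) : ℝ) + 1 ≤ m := by exact_mod_cast him
        linarith
      linarith
    have h2 : (m : ℝ) ≤ N * ‖T₀ (u (i:ℕ))‖ := le_trans this hb
    have hNr : (N : ℝ) = 2 * m := by rw [hN]; push_cast; ring
    rw [hNr] at h2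
    have hmpos : (0:ℝ) < m := by exact_mod_cast hm
    nlinarith [h2, hmpos]
  · intro i
    have h1 : ‖u (i:ℕ)‖ = 1 := (hu (i:ℕ) (by omega : (i:ℕ) < N)).1
    have : ‖(T₀ (u i) : X)‖ = ‖T₀ (u (i:ℕ))‖ := rfl
    rw [this]
    calc ‖T₀ (u (i:ℕ))‖ ≤ ‖T₀‖ * ‖u (i:ℕ)‖ := T₀.le_opNorm _
      _ ≤ 1 * 1 := by apply mul_le_mul hT₀ (le_of_eq h1) (norm_nonneg _) zero_le_one
      _ = 1 := one_mul _
  · intro x'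
    set φ : EuclideanSpace ℂ (Fin N) →L[ℂ] ℂ := (x'.comp E.subtypeL).comp T₀ with hφ
    have hφnorm : ‖φ‖ ≤ ‖x'‖ := by
      apply ContinuousLinearMap.opNorm_le_bound _ (norm_nonneg x')
      intro w
      have : φ w = x' ((T₀ w : X)) := rfl
      rw [this]
      calc ‖x' ((T₀ w : X))‖ ≤ ‖x'‖ * ‖(T₀ w : X)‖ := x'.le_opNorm _
        _ = ‖x'‖ * ‖T₀ w‖ := rfl
        _ ≤ ‖x'‖ * (‖T₀‖ * ‖w‖) := by
            apply mul_le_mul_of_nonneg_left (T₀.le_opNorm w) (norm_nonneg x')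
        _ ≤ ‖x'‖ * (1 * ‖w‖) := by
            apply mul_le_mul_of_nonneg_left _ (norm_nonneg x')
            apply mul_le_mul_of_nonneg_right hT₀ (norm_nonneg w)
        _ = ‖x'‖ * ‖w‖ := by ring
    set w₀ := (InnerProductSpace.toDual ℂ (EuclideanSpace ℂ (Fin N))).symm φ with hw₀
    have hw₀norm : ‖w₀‖ = ‖φ‖ := by
      rw [hw₀]
      exact LinearIsometryEquiv.norm_map _ _
    have hw₀inner : ∀ z, (inner ℂ w₀ z : ℂ) = φ z := fun z => InnerProductSpace.toDual_symm_apply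
    -- Bessel + Cauchy-Schwarz
    have hONm : Orthonormal ℂ (fun i : Fin m => u i) := by
      have hON := goodSeq_orthonormal hu
      have : (fun i : Fin m => u i) = (fun i : Fin N => u i) ∘ (fun i : Fin m => Fin.castLE (by omega) i) := by
        funext i; rfl
      rw [this]
      exact hON.comp _ (Fin.castLE_injective _)
    have hbessel : ∑ i : Fin m, ‖(inner ℂ (u i) w₀ : ℂ)‖ ^ 2 ≤ ‖w₀‖ ^ 2 :=
      hONm.sum_inner_products_le w₀
    have hterm : ∀ i : Fin m, ‖x' ((T₀ (u i) : X))‖ = ‖(inner ℂ (u i) w₀ : ℂ)‖ := by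
      intro i
      have h1 : x' ((T₀ (u i) : X)) = φ (u i) := rfl
      rw [h1, ← hw₀inner (u i), ← inner_conj_symm, RCLike.norm_conj]
    have hsum : ∑ i : Fin m, ‖x' ((T₀ (u i) : X))‖ = ∑ i : Fin m, ‖(inner ℂ (u i) w₀ : ℂ)‖ := by
      apply Finset.sum_congr rfl; intro i _; exact hterm i
    rw [hsum]
    -- Cauchy-Schwarz
    have hcs : (∑ i : Fin m, ‖(inner ℂ (u i) w₀ : ℂ)‖) ^ 2
        ≤ m * ∑ i : Fin m, ‖(inner ℂ (u i) w₀ : ℂ)‖ ^ 2 := by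
      have := sq_sum_le_card_mul_sum_sq (s := (Finset.univ : Finset (Fin m)))
        (f := fun i => ‖(inner ℂ (u i) w₀ : ℂ)‖)
      simpa using this
    have hnn : 0 ≤ ∑ i : Fin m, ‖(inner ℂ (u i) w₀ : ℂ)‖ :=
      Finset.sum_nonneg fun i _ => norm_nonneg _
    have hfinal : (∑ i : Fin m, ‖(inner ℂ (u i) w₀ : ℂ)‖) ^ 2 ≤ m * ‖w₀‖ ^ 2 := by
      calc (∑ i : Fin m, ‖(inner ℂ (u i) w₀ : ℂ)‖) ^ 2
          ≤ m * ∑ i : Fin m, ‖(inner ℂ (u i) w₀ : ℂ)‖ ^ 2 := hcs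
        _ ≤ m * ‖w₀‖ ^ 2 := by
            apply mul_le_mul_of_nonneg_left hbessel (by positivity)
    calc ∑ i : Fin m, ‖(inner ℂ (u i) w₀ : ℂ)‖
        = Real.sqrt ((∑ i : Fin m, ‖(inner ℂ (u i) w₀ : ℂ)‖) ^ 2) := (Real.sqrt_sq hnn).symm
      _ ≤ Real.sqrt (m * ‖w₀‖ ^ 2) := Real.sqrt_le_sqrt hfinal
      _ = Real.sqrt m * Real.sqrt (‖w₀‖ ^ 2) := Real.sqrt_mul (by positivity) _
      _ = Real.sqrt m * ‖w₀‖ := by rw [Real.sqrt_sq (norm_nonneg _)]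
      _ ≤ Real.sqrt m * ‖x'‖ := by
          apply mul_le_mul_of_nonneg_left _ (Real.sqrt_nonneg _)
          rw [hw₀norm]; exact hφnorm

section Dirichlet

variable {X : Type*} [NormedAddCommGroup X] [NormedSpace ℂ X]

/-- The block coefficient sequence built from Dvoretzky–Rogers families. -/
noncomputable def drSeq (xf : ∀ k : ℕ, Fin (2^k) → X) : ℕ → X := fun n =>
  if n = 0 then 0 else
    (fun k i => if h : i < 2^k then xf k ⟨i, h⟩ else 0) (Nat.log 2 n) (n - 2^(Nat.log 2 n))

lemma drSeq_block (xf : ∀ k : ℕ, Fin (2^k) → X) (k i : ℕ) (hi : i < 2^k) :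
    drSeq xf (2^k + i) = xf k ⟨i, hi⟩ := by
  have hpos : 0 < 2^k := Nat.pow_pos (by norm_num)
  have hne : 2^k + i ≠ 0 := by omega
  have hlog : Nat.log 2 (2^k + i) = k := by
    apply Nat.log_eq_of_pow_le_of_lt_pow (by omega)
    have : 2^(k+1) = 2^k + 2^k := by rw [pow_succ]; omega
    omega
  unfold drSeq
  rw [if_neg hne, hlog]
  have harith : 2^k + i - 2^k = i := by omega
  rw [harith]
  simp only []
  rw [dif_pos hi]

lemma drSeq_norm (xf : ∀ k : ℕ, Fin (2^k) → X)
    (h1 : ∀ k, ∀ i, (1:ℝ)/2 ≤ ‖xf k i‖) (h2 : ∀ k, ∀ i, ‖xf k i‖ ≤ 1)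
    (n : ℕ) (hn : n ≠ 0) : (1:ℝ)/2 ≤ ‖drSeq xf n‖ ∧ ‖drSeq xf n‖ ≤ 1 := by
  set k := Nat.log 2 n with hk
  have hle : 2^k ≤ n := Nat.pow_log_le_self 2 hn
  have hlt : n < 2^(k+1) := Nat.lt_pow_succ_log_self (by norm_num) n
  have h2k : 2^(k+1) = 2^k + 2^k := by rw [pow_succ]; omega
  have hi : n - 2^k < 2^k := by omega
  have hrepr : n = 2^k + (n - 2^k) := by omega
  rw [hrepr, drSeq_block xf k (n - 2^k) hi]
  exact ⟨h1 k _, h2 k _⟩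

lemma drSeq_weak_summable (xf : ∀ k : ℕ, Fin (2^k) → X)
    (h3 : ∀ k, ∀ x' : X →L[ℂ] ℂ, ∑ i, ‖x' (xf k i)‖ ≤ Real.sqrt (2^k) * ‖x'‖)
    (x' : X →L[ℂ] ℂ) (σ : ℝ) (hσ : 1/2 < σ) :
    Summable (fun n : ℕ => ‖x' (drSeq xf (n + 1))‖ * ((n + 1 : ℕ) : ℝ) ^ (-σ)) := by
  have hσ0 : (0:ℝ) < σ := by linarith
  set ρ : ℝ := (2:ℝ) ^ ((1:ℝ)/2 - σ) with hρ
  have hρ0 : 0 ≤ ρ := le_of_lt (Real.rpow_pos_of_pos (by norm_num) _)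
  have hρ1 : ρ < 1 := Real.rpow_lt_one_of_one_lt_of_neg (by norm_num) (by linarith)
  set g : ℕ → ℝ := fun n => ‖x' (drSeq xf n)‖ * ((n : ℕ) : ℝ) ^ (-σ) with hg
  have hgnonneg : ∀ n, 0 ≤ g n := fun n => by
    apply mul_nonneg (norm_nonneg _) (Real.rpow_nonneg (by positivity) _)
  -- block bound
  have hblock : ∀ k : ℕ, ∑ n ∈ Finset.Ico (2^k) (2^(k+1)), g n ≤ ‖x'‖ * ρ ^ k := by
    intro k
    have hpos : (0:ℝ) < ((2^k : ℕ) : ℝ) := by positivity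
    have hstep1 : ∑ n ∈ Finset.Ico (2^k) (2^(k+1)), g n
        ≤ ∑ n ∈ Finset.Ico (2^k) (2^(k+1)), ‖x' (drSeq xf n)‖ * ((2^k : ℕ) : ℝ) ^ (-σ) := by
      apply Finset.sum_le_sum
      intro n hn
      rw [Finset.mem_Ico] at hn
      apply mul_le_mul_of_nonneg_left _ (norm_nonneg _)
      apply Real.rpow_le_rpow_of_nonpos hpos _ (by linarith)
      exact_mod_cast hn.1
    have h2k1 : 2^(k+1) - 2^k = 2^k := by rw [pow_succ]; omega
    have hstep2 : ∑ n ∈ Finset.Ico (2^k) (2^(k+1)), ‖x' (drSeq xf n)‖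
        = ∑ i : Fin (2^k), ‖x' (xf k i)‖ := by
      rw [Finset.sum_Ico_eq_sum_range, h2k1]
      rw [← Fin.sum_univ_eq_sum_range (fun i => ‖x' (drSeq xf (2^k + i))‖) (2^k)]
      apply Finset.sum_congr rfl
      intro i _
      rw [drSeq_block xf k i i.2]
    calc ∑ n ∈ Finset.Ico (2^k) (2^(k+1)), g n
        ≤ ∑ n ∈ Finset.Ico (2^k) (2^(k+1)), ‖x' (drSeq xf n)‖ * ((2^k : ℕ) : ℝ) ^ (-σ) := hstep1
      _ = (∑ n ∈ Finset.Ico (2^k) (2^(k+1)), ‖x' (drSeq xf n)‖) * ((2^k : ℕ) : ℝ) ^ (-σ) :=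
          (Finset.sum_mul _ _ _).symm
      _ = (∑ i : Fin (2^k), ‖x' (xf k i)‖) * ((2^k : ℕ) : ℝ) ^ (-σ) := by rw [hstep2]
      _ ≤ (Real.sqrt (2^k) * ‖x'‖) * ((2^k : ℕ) : ℝ) ^ (-σ) := by
          apply mul_le_mul_of_nonneg_right _ (Real.rpow_nonneg (le_of_lt hpos) _)
          have := h3 k x'
          exact_mod_cast this
      _ = ‖x'‖ * (Real.sqrt ((2:ℝ)^(k:ℕ)) * ((2:ℝ)^(k:ℕ)) ^ (-σ)) := by
          push_cast
          ring
      _ = ‖x'‖ * ρ ^ k := by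
          congr 1
          rw [← Real.rpow_natCast 2 k, Real.sqrt_eq_rpow,
            ← Real.rpow_mul (by norm_num : (0:ℝ) ≤ 2),
            ← Real.rpow_mul (by norm_num : (0:ℝ) ≤ 2),
            ← Real.rpow_add (by norm_num : (0:ℝ) < 2)]
          rw [hρ, ← Real.rpow_natCast ((2:ℝ) ^ ((1:ℝ)/2 - σ)) k,
            ← Real.rpow_mul (by norm_num : (0:ℝ) ≤ 2)]
          congr 1
          ring
  -- splitting the initial segment into blocks
  have hsplit : ∀ K : ℕ, ∑ n ∈ Finset.Ico 1 (2^K), g n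
      = ∑ k ∈ Finset.range K, ∑ n ∈ Finset.Ico (2^k) (2^(k+1)), g n := by
    intro K
    induction K with
    | zero => simp
    | succ K ihK =>
      rw [Finset.sum_range_succ, ← ihK]
      rw [Finset.sum_Ico_consecutive g (Nat.one_le_two_pow)
        (Nat.pow_le_pow_right (by norm_num) (by omega))]
  -- partial sums are bounded
  have hgeom : ∀ n : ℕ, ∑ k ∈ Finset.range n, ρ ^ k ≤ (1 - ρ)⁻¹ := by
    intro n
    have hhs := hasSum_geometric_of_lt_one hρ0 hρ1
    have := sum_le_hasSum (Finset.range n) (fun i _ => pow_nonneg hρ0 i) hhs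
    exact this
  apply summable_of_sum_range_le (c := ‖x'‖ * (1 - ρ)⁻¹)
    (fun n => hgnonneg (n+1))
  intro M
  have hre : ∑ n ∈ Finset.range M, g (n + 1) = ∑ n ∈ Finset.Ico 1 (M + 1), g n := by
    rw [Finset.sum_Ico_eq_sum_range]
    simp only [Nat.add_sub_cancel]
    apply Finset.sum_congr rfl
    intro i _
    rw [Nat.add_comm 1 i]
  have hsub : Finset.Ico 1 (M+1) ⊆ Finset.Ico 1 (2^(M+1)) := by
    apply Finset.Ico_subset_Ico le_rfl
    have := Nat.lt_two_pow_self (n := M+1)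
    omega
  calc ∑ n ∈ Finset.range M, g (n+1) = ∑ n ∈ Finset.Ico 1 (M+1), g n := hre
    _ ≤ ∑ n ∈ Finset.Ico 1 (2^(M+1)), g n :=
        Finset.sum_le_sum_of_subset_of_nonneg hsub (fun i _ _ => hgnonneg i)
    _ = ∑ k ∈ Finset.range (M+1), ∑ n ∈ Finset.Ico (2^k) (2^(k+1)), g n := hsplit (M+1)
    _ ≤ ∑ k ∈ Finset.range (M+1), ‖x'‖ * ρ ^ k := Finset.sum_le_sum fun k _ => hblock k
    _ = ‖x'‖ * ∑ k ∈ Finset.range (M+1), ρ ^ k := by rw [Finset.mul_sum]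
    _ ≤ ‖x'‖ * (1 - ρ)⁻¹ := mul_le_mul_of_nonneg_left (hgeom (M+1)) (norm_nonneg _)

end Dirichlet

section Dirichlet2

variable {X : Type*} [NormedAddCommGroup X] [NormedSpace ℂ X]

lemma drSeq_strong_not_summable (xf : ∀ k : ℕ, Fin (2^k) → X)
    (h1 : ∀ k, ∀ i, (1:ℝ)/2 ≤ ‖xf k i‖)
    (h2 : ∀ k, ∀ i, ‖xf k i‖ ≤ 1)
    (r : ℝ) (hr : ∀ σ : ℝ, r < σ → Summable (fun n : ℕ => ‖drSeq xf (n + 1)‖ * ((n + 1 : ℕ) : ℝ) ^ (-σ)))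
    : (1:ℝ) ≤ r := by
  by_contra hcon
  push_neg at hcon
  set σ : ℝ := (r + 1) / 2 with hσdef
  have hσr : r < σ := by rw [hσdef]; linarith
  have hσ1 : σ ≤ 1 := by rw [hσdef]; linarith
  have hsum := hr σ hσr
  have hcomp : ∀ n : ℕ, (1/2 : ℝ) * ((n:ℝ) + 1)⁻¹ ≤ ‖drSeq xf (n + 1)‖ * ((n + 1 : ℕ) : ℝ) ^ (-σ) := by
    intro n
    have hb := drSeq_norm xf h1 h2 (n+1) (Nat.succ_ne_zero n)
    have hx : (1:ℝ) ≤ ((n + 1 : ℕ) : ℝ) := by exact_mod_cast Nat.one_le_iff_ne_zero.mpr (Nat.succ_ne_zero n)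
    have hrp : ((n:ℝ) + 1)⁻¹ ≤ ((n + 1 : ℕ) : ℝ) ^ (-σ) := by
      have := Real.rpow_le_rpow_of_exponent_le hx (by linarith : -(1:ℝ) ≤ -σ)
      rw [Real.rpow_neg_one] at this
      calc ((n:ℝ) + 1)⁻¹ = (((n + 1 : ℕ) : ℝ))⁻¹ := by push_cast; ring_nf
        _ ≤ ((n + 1 : ℕ) : ℝ) ^ (-σ) := this
    apply mul_le_mul hb.1 hrp (by positivity) (norm_nonneg _)
  have hsum2 : Summable (fun n : ℕ => (1/2 : ℝ) * ((n:ℝ) + 1)⁻¹) := by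
    apply Summable.of_nonneg_of_le (fun n => by positivity) hcomp hsum
  have hsum3 : Summable (fun n : ℕ => ((n:ℝ) + 1)⁻¹) := by
    have := hsum2.mul_left 2
    simpa using this
  have hsum4 : Summable (fun n : ℕ => ((n:ℝ))⁻¹) := by
    rw [← summable_nat_add_iff 1]
    simpa [Nat.cast_add] using hsum3
  exact Real.not_summable_natCast_inv hsum4

lemma drSeq_conv [CompleteSpace X] (xf : ∀ k : ℕ, Fin (2^k) → X)
    (h1 : ∀ k, ∀ i, (1:ℝ)/2 ≤ ‖xf k i‖)
    (h2 : ∀ k, ∀ i, ‖xf k i‖ ≤ 1)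
    (s : ℂ) (hs : 2 < s.re) :
    ∃ L : X, Tendsto
      (fun N : ℕ => ∑ n ∈ Finset.range N, (((n + 1 : ℕ) : ℂ) ^ (-s)) • drSeq xf (n + 1))
      atTop (𝓝 L) := by
  set f : ℕ → X := fun n => (((n + 1 : ℕ) : ℂ) ^ (-s)) • drSeq xf (n + 1) with hf
  have hnorm : ∀ n : ℕ, ‖f n‖ ≤ ((n + 1 : ℕ) : ℝ) ^ (-s.re) := by
    intro n
    rw [hf]
    simp only []
    rw [norm_smul]
    have hcn : ‖((n + 1 : ℕ) : ℂ) ^ (-s)‖ = ((n + 1 : ℕ) : ℝ) ^ ((-s).re) :=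
      Complex.norm_natCast_cpow_of_pos (Nat.succ_pos n) _
    rw [hcn, Complex.neg_re]
    calc ((n + 1 : ℕ) : ℝ) ^ (-s.re) * ‖drSeq xf (n + 1)‖
        ≤ ((n + 1 : ℕ) : ℝ) ^ (-s.re) * 1 := by
          apply mul_le_mul_of_nonneg_left _ (Real.rpow_nonneg (by positivity) _)
          exact (drSeq_norm xf h1 h2 (n+1) (Nat.succ_ne_zero n)).2
      _ = ((n + 1 : ℕ) : ℝ) ^ (-s.re) := mul_one _
  have hsum0 : Summable (fun n : ℕ => ((n + 1 : ℕ) : ℝ) ^ (-s.re)) := by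
    have h1p : (1:ℝ) < s.re := by linarith
    have hbase := (Real.summable_one_div_nat_rpow (p := s.re)).mpr h1p
    have hshift := (summable_nat_add_iff 1).mpr hbase
    apply hshift.congr
    intro n
    rw [Real.rpow_neg (by positivity)]
    push_cast
    rw [one_div]
  have hsn : Summable (fun n => ‖f n‖) :=
    Summable.of_nonneg_of_le (fun n => norm_nonneg _) hnorm hsum0
  have hsf : Summable f := Summable.of_norm hsn
  exact ⟨∑' n, f n, hsf.hasSum.tendsto_sum_nat⟩

end Dirichlet2

/-- The abscissa of convergence `σ_c(D)` of the Dirichlet series `D = ∑ₙ aₙ n^{-s}`,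
as an extended real number. -/
noncomputable def dirichletSigmaC {X : Type*} [NormedAddCommGroup X] [NormedSpace ℂ X]
    (a : ℕ → X) : EReal :=
  sInf { x : EReal | ∃ r : ℝ, x = (r : EReal) ∧ ∀ s : ℂ, r < s.re →
    ∃ L : X, Tendsto
      (fun N : ℕ => ∑ n ∈ Finset.range N, (((n + 1 : ℕ) : ℂ) ^ (-s)) • a (n + 1))
      atTop (𝓝 L) }

/-- The abscissa of absolute convergence `σ_a(D)` of `D = ∑ₙ aₙ n^{-s}`. -/
noncomputable def dirichletSigmaA {X : Type*} [SeminormedAddCommGroup X]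
    (a : ℕ → X) : EReal :=
  sInf { x : EReal | ∃ r : ℝ, x = (r : EReal) ∧ ∀ σ : ℝ, r < σ →
    Summable (fun n : ℕ => ‖a (n + 1)‖ * ((n + 1 : ℕ) : ℝ) ^ (-σ)) }

/-- The abscissa of weak absolute convergence `σ_a^w(D) = sup_{x'} σ_a(x'(D))`. -/
noncomputable def dirichletSigmaAw {X : Type*} [NormedAddCommGroup X] [NormedSpace ℂ X]
    (a : ℕ → X) : EReal :=
  ⨆ x' : X →L[ℂ] ℂ, dirichletSigmaA (fun n => x' (a n))

/-- The gap for absolute convergence of Dirichlet series in `X`: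
`G_a(X) = sup_D (σ_a(D) - σ_a^w(D))`, the supremum over all Dirichlet series with
coefficients in `X` and finite abscissa of convergence. -/
noncomputable def dirichletGapA (X : Type*) [NormedAddCommGroup X] [NormedSpace ℂ X] :
    EReal :=
  sSup { g : EReal | ∃ a : ℕ → X, dirichletSigmaC a < ⊤ ∧
    g = dirichletSigmaA a - dirichletSigmaAw a }

/-- Every infinite-dimensional complex Banach space `X` satisfies `G_a(X) ≥ 1/2`. -/
theorem gapA_ge_half_of_infinite_dimensional
    (X : Type*) [NormedAddCommGroup X] [NormedSpace ℂ X] [CompleteSpace X]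
    (hX : ¬ FiniteDimensional ℂ X) :
    ((1 / 2 : ℝ) : EReal) ≤ dirichletGapA X := by
  classical
  -- choose the Dvoretzky–Rogers families for each block
  have hdr : ∀ k : ℕ, ∃ x : Fin (2^k) → X, (∀ i, (1:ℝ)/2 ≤ ‖x i‖) ∧ (∀ i, ‖x i‖ ≤ 1) ∧
      ∀ x' : X →L[ℂ] ℂ, ∑ i, ‖x' (x i)‖ ≤ Real.sqrt (2^k) * ‖x'‖ := by
    intro k
    have := dvoretzky_rogers hX (2^k)
    simpa using this
  choose xf hxf1 hxf2 hxf3 using hdr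
  set a : ℕ → X := drSeq xf with ha
  -- σ_c < ⊤
  have hσc : dirichletSigmaC a < ⊤ := by
    have hmem : ((2:ℝ) : EReal) ∈ { x : EReal | ∃ r : ℝ, x = (r : EReal) ∧ ∀ s : ℂ, r < s.re →
        ∃ L : X, Tendsto
          (fun N : ℕ => ∑ n ∈ Finset.range N, (((n + 1 : ℕ) : ℂ) ^ (-s)) • a (n + 1))
          atTop (𝓝 L) } :=
      ⟨2, rfl, fun s hs => drSeq_conv xf hxf1 hxf2 s hs⟩
    exact lt_of_le_of_lt (sInf_le hmem) (EReal.coe_lt_top 2)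
  -- σ_a ≥ 1
  have hσa : ((1:ℝ) : EReal) ≤ dirichletSigmaA a := by
    apply le_sInf
    rintro b ⟨r, rfl, hr⟩
    exact EReal.coe_le_coe_iff.mpr (drSeq_strong_not_summable xf hxf1 hxf2 r hr)
  -- σ_a^w ≤ 1/2
  have hσaw : dirichletSigmaAw a ≤ ((1/2 : ℝ) : EReal) := by
    apply iSup_le
    intro x'
    apply sInf_le
    exact ⟨1/2, rfl, fun σ hσ => drSeq_weak_summable xf hxf3 x' σ hσ⟩
  -- conclude
  apply le_sSup_of_le (show dirichletSigmaA a - dirichletSigmaAw a ∈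
    { g : EReal | ∃ a : ℕ → X, dirichletSigmaC a < ⊤ ∧
      g = dirichletSigmaA a - dirichletSigmaAw a } from ⟨a, hσc, rfl⟩)
  calc ((1/2 : ℝ) : EReal) = ((1 - 1/2 : ℝ) : EReal) := by norm_num
    _ = ((1:ℝ) : EReal) - ((1/2 : ℝ) : EReal) := EReal.coe_sub _ _
    _ ≤ dirichletSigmaA a - dirichletSigmaAw a := EReal.sub_le_sub hσa hσaw
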